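/- Let X be a compact Hausdorff space and F ⊆ C(X) a norm-bounded set that is relatively weakly compact in C(X). Then F has the sequential closure property: for every sequence (fₙ) in F converging pointwise to a function f, and for every sequence (aₘ) in X such that limₘ f(aₘ) exists, one has limₘ f(aₘ) = f(a) for every cluster point a of (aₘ). -/

import Mathlib

open Filter Topology

/-- The identity map from `C(X, ℝ)` to itself equipped with the weak topology. -/
noncomputable def toWeak {X : Type*} [TopologicalSpace X] [CompactSpace X] :
    C(X, ℝ) → WeakSpace ℝ C(X, ℝ) := fun f => f

/-- A relatively weakly compact norm-bounded set `F ⊆ C(X)` has the sequential closure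
property: for every pointwise convergent sequence from `F` with limit `f` and every
sequence `(aₘ)` in `X` such that `limₘ f (aₘ)` exists, that limit equals `f a` for every
cluster point `a` of `(aₘ)`. -/
theorem relatively_weakly_compact_implies_scp
    {X : Type*} [TopologicalSpace X] [CompactSpace X] [T2Space X]
    (F : Set C(X, ℝ))
    (hbdd : ∃ r : ℝ, ∀ f ∈ F, ‖f‖ ≤ r)
    (hwc : IsCompact (closure (toWeak '' F))) :
    ∀ (f : ℕ → C(X, ℝ)), (∀ n, f n ∈ F) →
      ∀ (g : X → ℝ), (∀ x, Tendsto (fun n => f n x) atTop (𝓝 (g x))) →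
      ∀ (a : ℕ → X) (L : ℝ), Tendsto (fun m => g (a m)) atTop (𝓝 L) →
      ∀ b : X, MapClusterPt b atTop a → L = g b := by
  intro f hf g hg a L ha b hb
  -- the sequence `toWeak ∘ f` lives in the compact set `closure (toWeak '' F)`
  have hmem : ∀ n, toWeak (f n) ∈ closure (toWeak '' F) := fun n =>
    subset_closure ⟨f n, hf n, rfl⟩
  obtain ⟨h, -, hcl⟩ := hwc.exists_mapClusterPt (f := atTop)
    (u := fun n => toWeak (f n))
    (by rw [Filter.le_principal_iff, Filter.mem_map]; exact univ_mem' hmem)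
  set h' : C(X, ℝ) := h with hh'
  -- evaluation at `x` is weakly continuous, so `h x` is a cluster point of `f n x`
  have hx : ∀ x : X, h' x = g x := by
    intro x
    have hcont : Continuous fun w : WeakSpace ℝ C(X, ℝ) =>
        (ContinuousMap.evalCLM (R := ℝ) (M := ℝ) x) w :=
      WeakBilin.eval_continuous ((topDualPairing ℝ C(X, ℝ)).flip)
        (ContinuousMap.evalCLM (R := ℝ) (M := ℝ) x)
    have hcp : MapClusterPt (h' x) atTop (fun n => f n x) :=
      hcl.continuousAt_comp hcont.continuousAt
    -- cluster point of a convergent sequence equals the limit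
    have : NeBot (𝓝 (h' x) ⊓ 𝓝 (g x)) :=
      hcp.clusterPt.neBot.mono (inf_le_inf_left _ (hg x))
    exact eq_of_nhds_neBot this
  -- hence `g` is continuous
  have hgc : Continuous g := by
    have : g = (h' : X → ℝ) := funext fun x => (hx x).symm
    rw [this]; exact h'.continuous
  -- `g b` is a cluster point of `g ∘ a`, which converges to `L`
  have hcp : MapClusterPt (g b) atTop (g ∘ a) := hb.continuousAt_comp hgc.continuousAt
  have : NeBot (𝓝 (g b) ⊓ 𝓝 L) := hcp.clusterPt.neBot.mono (inf_le_inf_left _ ha)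
  exact (eq_of_nhds_neBot this).symm
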